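/- Let ≽ be a regular stochastic order on F(Ω). If f ≽ 0 and b : Ω → ℝ is bounded with b ≥ 0 pointwise, then f·b ≽ 0 (pointwise product). -/
import Mathlib


/-- A regular stochastic order on `F(Ω)`: a reflexive and transitive binary relation
satisfying (TRIV), (CONE), (CERT), (APPR) and (REST). -/
def IsRegularOrder {Ω : Type*} (R : (Ω → ℝ) → (Ω → ℝ) → Prop) : Prop :=
  Reflexive R ∧ Transitive R ∧
  ¬ R 0 1 ∧
  (∀ f₁ g₁ f₂ g₂ : Ω → ℝ, ∀ a₁ a₂ : ℝ, R f₁ g₁ → R f₂ g₂ → 0 ≤ a₁ → 0 ≤ a₂ →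
    R (a₁ • f₁ + a₂ • f₂) (a₁ • g₁ + a₂ • g₂)) ∧
  (∀ f : Ω → ℝ, (0 : Ω → ℝ) ≤ f → R f 0) ∧
  (∀ f : Ω → ℝ, (∀ n : ℕ, R (f + fun _ => (2 : ℝ)⁻¹ ^ n) 0) → R f 0) ∧
  (∀ (f : Ω → ℝ) (A : Set Ω), R f 0 → R (A.indicator f) 0)

/-- If `f ≽ 0` and `b` is bounded and nonnegative then `f·b ≽ 0`. -/
theorem stmt_3 {Ω : Type*} [Nonempty Ω] (R : (Ω → ℝ) → (Ω → ℝ) → Prop)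
    (hR : IsRegularOrder R) (f b : Ω → ℝ)
    (hf : R f 0)
    (hbdd : ∃ M : ℝ, ∀ ω, |b ω| ≤ M)
    (hbnn : ∀ ω, 0 ≤ b ω) :
    R (f * b) 0 := by
  obtain ⟨_, _, _, cone, cert, _, rest⟩ := hR
  obtain ⟨M, hM⟩ := hbdd
  obtain ⟨ω₀⟩ := ‹Nonempty Ω›
  have hM0 : 0 ≤ M := le_trans (abs_nonneg _) (hM ω₀)
  have hbM : ∀ ω, b ω ≤ M := fun ω => le_trans (le_abs_self _) (hM ω)
  set N : Set Ω := {ω | f ω < 0} with hN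
  -- g = -f⁻, the indicator of f on N
  set g : Ω → ℝ := N.indicator f with hg
  have h1 : R g 0 := rest f N hf
  have hg_le : ∀ ω, g ω ≤ 0 := by
    intro ω
    by_cases h : ω ∈ N
    · simp [hg, Set.indicator_of_mem h]; exact le_of_lt h
    · simp [hg, Set.indicator_of_notMem h]
  -- w := g*b - M•g ≥ 0 pointwise
  have hw : (0 : Ω → ℝ) ≤ fun ω => g ω * b ω - M * g ω := by
    intro ω
    have : g ω * M ≤ g ω * b ω :=
      mul_le_mul_of_nonpos_left (hbM ω) (hg_le ω)
    simp only [Pi.zero_apply]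
    nlinarith [this]
  have hw' : R (fun ω => g ω * b ω - M * g ω) 0 := cert _ hw
  -- v := g*b ≽ 0
  have h2 : R (fun ω => g ω * b ω) 0 := by
    have := cone _ _ _ _ 1 M hw' h1 zero_le_one hM0
    have e : (1 : ℝ) • (fun ω => g ω * b ω - M * g ω) + M • g
        = fun ω => g ω * b ω := by
      funext ω
      simp only [Pi.add_apply, Pi.smul_apply, smul_eq_mul, one_mul]
      ring
    have e0 : (1 : ℝ) • (0 : Ω → ℝ) + M • (0 : Ω → ℝ) = 0 := by simp
    rwa [e, e0] at this
  -- u := f⁺ * b ≥ 0 pointwise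
  have h3 : R (fun ω => max (f ω) 0 * b ω) 0 := by
    apply cert
    intro ω
    exact mul_nonneg (le_max_right _ _) (hbnn ω)
  -- sum
  have := cone _ _ _ _ 1 1 h3 h2 zero_le_one zero_le_one
  have e : (1 : ℝ) • (fun ω => max (f ω) 0 * b ω) + (1 : ℝ) • (fun ω => g ω * b ω)
      = f * b := by
    funext ω
    by_cases h : ω ∈ N
    · have hf0 : f ω < 0 := h
      simp [hg, Set.indicator_of_mem h, max_eq_right (le_of_lt hf0)]
    · have hf0 : ¬ f ω < 0 := h
      simp [hg, Set.indicator_of_notMem h, max_eq_left (not_lt.mp hf0)]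
  have e0 : (1 : ℝ) • (0 : Ω → ℝ) + (1 : ℝ) • (0 : Ω → ℝ) = 0 := by simp
  rwa [e, e0] at this
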